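/- arXiv:2403.03990 — 2 statements merged into one kernel-verified Lean document; each statement's English description precedes it below -/
import Mathlib

section
/- In the full Sierpinski tree on 3^k nodes, the set of descendants of the root C = (3^k − 1)/2 (including C itself) is exactly all 3^k nodes, and for each node j, the descendant set of j is a contiguous interval of indices containing j. -/
/-- "Left" point: midpoint of the first third of `[S, E]`. -/
def sL (S E : ℕ) : ℕ := S + ((E - S + 1) / 3 - 1) / 2

/-- "Center" point: midpoint of `[S, E]`. -/
def sC (S E : ℕ) : ℕ := (S + E) / 2

/-- "Right" point: midpoint of the final third of `[S, E]`. -/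
def sR (S E : ℕ) : ℕ := E - (sL S E - S)

/-- Offset `T = 2(L - S)` used to split `[S,E]` into thirds. -/
def sT (S E : ℕ) : ℕ := 2 * (sL S E - S)

/-- `SEdge S E p c` : the recursive construction `sierpinski(S, E)` produces
the directed edge from parent `p` to child `c`. -/
inductive SEdge : ℕ → ℕ → ℕ → ℕ → Prop where
  | cl (S E : ℕ) : S ≠ E → SEdge S E (sC S E) (sL S E)
  | cr (S E : ℕ) : S ≠ E → SEdge S E (sC S E) (sR S E)
  | recL (S E p c : ℕ) : S ≠ E → SEdge S (S + sT S E) p c → SEdge S E p c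
  | recC (S E p c : ℕ) : S ≠ E →
      SEdge (S + sT S E + 1) (S + 2 * sT S E + 1) p c → SEdge S E p c
  | recR (S E p c : ℕ) : S ≠ E → SEdge (S + 2 * sT S E + 2) E p c → SEdge S E p c

/-- Edges of the full Sierpinski tree on `3 ^ k` nodes. -/
def fullEdge (k : ℕ) (p c : ℕ) : Prop := SEdge 0 (3 ^ k - 1) p c

/-- Reachability (descendant relation, reflexive) in the full tree on `3 ^ k` nodes. -/
def reaches (k : ℕ) (a b : ℕ) : Prop := Relation.ReflTransGen (fullEdge k) a b

/-- The update set `B(j)` : `j` together with all of its ancestors. -/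
def updSet (k j : ℕ) : Set ℕ := {m | reaches k m j}

/-- The prefix-sum query set `P(j)` : nodes `m` whose descendant interval is
contained in `[0, j]`, but whose parent's descendant interval is not. -/
def qrySet (k j : ℕ) : Set ℕ :=
  {m | m < 3 ^ k ∧ (∀ i, reaches k m i → i ≤ j) ∧
    ∀ p, fullEdge k p m → ¬ (∀ i, reaches k p i → i ≤ j)}

/- ---------------- auxiliary lemmas ---------------- -/

lemma three_pow_odd (n : ℕ) : 3 ^ n % 2 = 1 := by
  induction n with
  | zero => rfl
  | succ n ih => rw [pow_succ]; omega

lemma sLCRT (S m : ℕ) :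
    sL S (S + 6*m + 2) = S + m ∧ sC S (S + 6*m + 2) = S + 3*m + 1 ∧
    sR S (S + 6*m + 2) = S + 5*m + 2 ∧ sT S (S + 6*m + 2) = 2*m := by
  simp only [sL, sC, sR, sT]
  omega

lemma sedge_cases {S E p c : ℕ} (h : SEdge S E p c) :
    S ≠ E ∧ ((p = sC S E ∧ c = sL S E) ∨ (p = sC S E ∧ c = sR S E) ∨
      SEdge S (S + sT S E) p c ∨
      SEdge (S + sT S E + 1) (S + 2 * sT S E + 1) p c ∨
      SEdge (S + 2 * sT S E + 2) E p c) := by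
  cases h with
  | cl S E h => exact ⟨h, Or.inl ⟨rfl, rfl⟩⟩
  | cr S E h => exact ⟨h, Or.inr (Or.inl ⟨rfl, rfl⟩)⟩
  | recL S E p c h h' => exact ⟨h, Or.inr (Or.inr (Or.inl h'))⟩
  | recC S E p c h h' => exact ⟨h, Or.inr (Or.inr (Or.inr (Or.inl h')))⟩
  | recR S E p c h h' => exact ⟨h, Or.inr (Or.inr (Or.inr (Or.inr h')))⟩

lemma sedge_bound : ∀ n S p c, SEdge S (S + 3^n - 1) p c →
    S ≤ p ∧ p ≤ S + 3^n - 1 ∧ S ≤ c ∧ c ≤ S + 3^n - 1 := by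
  intro n
  induction n with
  | zero =>
    intro S p c h
    rw [show S + 3^0 - 1 = S from by norm_num] at h
    exact absurd rfl (sedge_cases h).1
  | succ n ih =>
    intro S p c h
    obtain ⟨m, hm⟩ : ∃ m, (3:ℕ)^n = 2*m+1 := ⟨3^n/2, by have := three_pow_odd n; omega⟩
    have h3 : (3:ℕ)^(n+1) = 6*m+3 := by rw [pow_succ]; omega
    have hE : S + 3^(n+1) - 1 = S + 6*m + 2 := by omega
    rw [hE] at h ⊢
    obtain ⟨hL, hC, hR, hT⟩ := sLCRT S m
    obtain ⟨-, hcase⟩ := sedge_cases h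
    rw [hL, hC, hR, hT] at hcase
    rcases hcase with ⟨hp, hc⟩ | ⟨hp, hc⟩ | h1 | h2 | h3'
    · omega
    · omega
    · rw [show S + 2*m = S + 3^n - 1 from by omega] at h1
      have := ih S p c h1; omega
    · rw [show S + 2*m + 1 = S + 2*m + 1 from rfl,
        show S + 2*(2*m) + 1 = (S + 2*m + 1) + 3^n - 1 from by omega] at h2
      have := ih (S + 2*m + 1) p c h2; omega
    · rw [show S + 2*(2*m) + 2 = S + 4*m + 2 from by omega,
        show S + 6*m + 2 = (S + 4*m + 2) + 3^n - 1 from by omega] at h3'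
      have := ih (S + 4*m + 2) p c h3'; omega

lemma sedge_child_ne_center : ∀ n S p c, SEdge S (S + 3^n - 1) p c →
    c ≠ sC S (S + 3^n - 1) := by
  intro n
  induction n with
  | zero =>
    intro S p c h
    rw [show S + 3^0 - 1 = S from by norm_num] at h
    exact absurd rfl (sedge_cases h).1
  | succ n ih =>
    intro S p c h
    obtain ⟨m, hm⟩ : ∃ m, (3:ℕ)^n = 2*m+1 := ⟨3^n/2, by have := three_pow_odd n; omega⟩
    have h3 : (3:ℕ)^(n+1) = 6*m+3 := by rw [pow_succ]; omega
    have hE : S + 3^(n+1) - 1 = S + 6*m + 2 := by omega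
    rw [hE] at h ⊢
    obtain ⟨hL, hC, hR, hT⟩ := sLCRT S m
    rw [hC]
    obtain ⟨-, hcase⟩ := sedge_cases h
    rw [hL, hC, hR, hT] at hcase
    rcases hcase with ⟨hp, hc⟩ | ⟨hp, hc⟩ | h1 | h2 | h3'
    · omega
    · omega
    · rw [show S + 2*m = S + 3^n - 1 from by omega] at h1
      have := sedge_bound n S p c h1; omega
    · rw [show S + 2*(2*m) + 1 = (S + 2*m + 1) + 3^n - 1 from by omega] at h2
      have := ih (S + 2*m + 1) p c h2
      have hcen : sC (S + 2*m + 1) ((S + 2*m + 1) + 3^n - 1) = S + 3*m + 1 := by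
        simp only [sC]; omega
      rw [hcen] at this; exact this
    · rw [show S + 2*(2*m) + 2 = S + 4*m + 2 from by omega,
        show S + 6*m + 2 = (S + 4*m + 2) + 3^n - 1 from by omega] at h3'
      have := sedge_bound n (S + 4*m + 2) p c h3'; omega

lemma reach_bound (n S a b : ℕ) (ha1 : S ≤ a) (ha2 : a ≤ S + 3^n - 1)
    (h : Relation.ReflTransGen (SEdge S (S + 3^n - 1)) a b) :
    S ≤ b ∧ b ≤ S + 3^n - 1 := by
  induction h with
  | refl => exact ⟨ha1, ha2⟩
  | tail _ e ih => have := sedge_bound n S _ _ e; omega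

/-- lift an edge of the left third to the full interval -/
lemma lift_left {S m p c : ℕ} (hne : S ≠ S + 6*m + 2)
    (h : SEdge S (S + 2*m) p c) : SEdge S (S + 6*m + 2) p c := by
  have hT := (sLCRT S m).2.2.2
  exact SEdge.recL _ _ _ _ hne (by rw [hT]; exact h)

lemma lift_mid {S m p c : ℕ} (hne : S ≠ S + 6*m + 2)
    (h : SEdge (S + 2*m + 1) (S + 4*m + 1) p c) : SEdge S (S + 6*m + 2) p c := by
  have hT := (sLCRT S m).2.2.2
  apply SEdge.recC _ _ _ _ hne
  rw [hT, show S + 2*(2*m) + 1 = S + 4*m + 1 from by omega]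
  exact h

lemma lift_right {S m p c : ℕ} (hne : S ≠ S + 6*m + 2)
    (h : SEdge (S + 4*m + 2) (S + 6*m + 2) p c) : SEdge S (S + 6*m + 2) p c := by
  have hT := (sLCRT S m).2.2.2
  apply SEdge.recR _ _ _ _ hne
  rw [hT, show S + 2*(2*m) + 2 = S + 4*m + 2 from by omega]
  exact h

/-- paths from a non-center vertex of a third stay inside that third -/
lemma reach_restrict (n S S' j i : ℕ)
    (hS' : S' = S ∨ S' = S + 3^n ∨ S' = S + 2*3^n)
    (hj1 : S' ≤ j) (hj2 : j ≤ S' + 3^n - 1)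
    (hjC : j ≠ sC S (S + 3^(n+1) - 1))
    (h : Relation.ReflTransGen (SEdge S (S + 3^(n+1) - 1)) j i) :
    Relation.ReflTransGen (SEdge S' (S' + 3^n - 1)) j i := by
  obtain ⟨m, hm⟩ : ∃ m, (3:ℕ)^n = 2*m+1 := ⟨3^n/2, by have := three_pow_odd n; omega⟩
  have h3 : (3:ℕ)^(n+1) = 6*m+3 := by rw [pow_succ]; omega
  have hE : S + 3^(n+1) - 1 = S + 6*m + 2 := by omega
  obtain ⟨hL, hC, hR, hT⟩ := sLCRT S m
  rw [hE, hC] at hjC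
  induction h with
  | refl => exact .refl
  | @tail x y hx e ih =>
    have hmB := reach_bound n S' j x hj1 hj2 ih
    have hmC : x ≠ S + 3*m + 1 := by
      rcases hS' with rfl | rfl | rfl
      · omega
      · intro hxeq
        have hcen : sC (S + 3^n) ((S + 3^n) + 3^n - 1) = S + 3*m + 1 := by
          simp only [sC]; omega
        rcases Relation.ReflTransGen.cases_tail ih with h' | ⟨c', _, e'⟩
        · exact hjC (by omega)
        · exact sedge_child_ne_center n _ c' x e' (hxeq.trans hcen.symm)
      · omega
    rw [hE] at e
    obtain ⟨hne, hcase⟩ := sedge_cases e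
    rw [hL, hC, hR, hT] at hcase
    rcases hcase with ⟨hp, hc⟩ | ⟨hp, hc⟩ | h1 | h2 | h3'
    · exact absurd hp hmC
    · exact absurd hp hmC
    · rw [show S + 2*m = S + 3^n - 1 from by omega] at h1
      have hb := sedge_bound n S x y h1
      rcases hS' with rfl | rfl | rfl
      · exact ih.tail h1
      · exfalso; omega
      · exfalso; omega
    · rw [show S + 2*(2*m) + 1 = (S + 2*m + 1) + 3^n - 1 from by omega] at h2
      have hb := sedge_bound n (S + 2*m + 1) x y h2
      rcases hS' with rfl | rfl | rfl
      · exfalso; omega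
      · apply ih.tail
        rw [show S + 3^n = S + 2*m + 1 from by omega]
        exact h2
      · exfalso; omega
    · rw [show S + 2*(2*m) + 2 = S + 4*m + 2 from by omega,
        show S + 6*m + 2 = (S + 4*m + 2) + 3^n - 1 from by omega] at h3'
      have hb := sedge_bound n (S + 4*m + 2) x y h3'
      rcases hS' with rfl | rfl | rfl
      · exfalso; omega
      · exfalso; omega
      · apply ih.tail
        rw [show S + 2*3^n = S + 4*m + 2 from by omega]
        exact h3'

/-- main structural lemma -/
lemma sierpinski_main : ∀ n S j, S ≤ j → j ≤ S + 3^n - 1 →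
    ∃ a b, S ≤ a ∧ a ≤ j ∧ j ≤ b ∧ b ≤ S + 3^n - 1 ∧
      (∀ i, Relation.ReflTransGen (SEdge S (S + 3^n - 1)) j i ↔ a ≤ i ∧ i ≤ b) ∧
      (j = sC S (S + 3^n - 1) → a = S ∧ b = S + 3^n - 1) := by
  intro n
  induction n with
  | zero =>
    intro S j hj1 hj2
    rw [show S + 3^0 - 1 = S from by norm_num] at hj2 ⊢
    have hj : j = S := le_antisymm hj2 hj1
    subst hj
    refine ⟨j, j, le_refl _, le_refl _, le_refl _, le_refl _, ?_, ?_⟩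
    · intro i
      constructor
      · intro h
        induction h with
        | refl => omega
        | tail _ e _ => exact absurd rfl (sedge_cases e).1
      · intro hi
        rw [show i = j from by omega]
    · intro _
      constructor <;> rfl
  | succ n ih =>
    intro S j hj1 hj2
    obtain ⟨m, hm⟩ : ∃ m, (3:ℕ)^n = 2*m+1 := ⟨3^n/2, by have := three_pow_odd n; omega⟩
    have h3 : (3:ℕ)^(n+1) = 6*m+3 := by rw [pow_succ]; omega
    have hE : S + 3^(n+1) - 1 = S + 6*m + 2 := by omega
    rw [hE] at hj2 ⊢
    obtain ⟨hL, hC, hR, hT⟩ := sLCRT S m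
    have hne : S ≠ S + 6*m + 2 := by omega
    by_cases hjC : j = S + 3*m + 1
    · subst hjC
      refine ⟨S, S + 6*m + 2, le_refl _, by omega, by omega, le_refl _, ?_,
        fun _ => ⟨rfl, rfl⟩⟩
      intro i
      constructor
      · intro h
        have hb := reach_bound (n+1) S (S + 3*m + 1) i (by omega) (by omega)
          (by rw [hE]; exact h)
        omega
      · intro hi
        rcases (by omega : i ≤ S + 2*m ∨ (S + 2*m + 1 ≤ i ∧ i ≤ S + 4*m + 1) ∨
            S + 4*m + 2 ≤ i) with hi' | hi' | hi'
        · -- left third via edge C → L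
          have hcen : sC S (S + 3^n - 1) = S + m := by simp only [sC]; omega
          obtain ⟨a, b, _, _, _, _, hiff, hcenc⟩ := ih S (S + m) (by omega) (by omega)
          obtain ⟨ha, hb⟩ := hcenc hcen.symm
          have hsub : Relation.ReflTransGen (SEdge S (S + 3^n - 1)) (S + m) i :=
            (hiff i).mpr (by omega)
          rw [show S + 3^n - 1 = S + 2*m from by omega] at hsub
          have hlift := Relation.ReflTransGen.mono (fun _ _ h => lift_left hne h) _ _ hsub
          have e := SEdge.cl S (S + 6*m + 2) hne
          rw [hC, hL] at e
          exact hlift.head e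
        · -- middle third: C is its center
          have hcen : sC (S + 2*m + 1) ((S + 2*m + 1) + 3^n - 1) = S + 3*m + 1 := by
            simp only [sC]; omega
          obtain ⟨a, b, _, _, _, _, hiff, hcenc⟩ := ih (S + 2*m + 1) (S + 3*m + 1)
            (by omega) (by omega)
          obtain ⟨ha, hb⟩ := hcenc hcen.symm
          have hsub : Relation.ReflTransGen
              (SEdge (S + 2*m + 1) ((S + 2*m + 1) + 3^n - 1)) (S + 3*m + 1) i :=
            (hiff i).mpr (by omega)
          rw [show (S + 2*m + 1) + 3^n - 1 = S + 4*m + 1 from by omega] at hsub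
          exact Relation.ReflTransGen.mono (fun _ _ h => lift_mid hne h) _ _ hsub
        · -- right third via edge C → R
          have hcen : sC (S + 4*m + 2) ((S + 4*m + 2) + 3^n - 1) = S + 5*m + 2 := by
            simp only [sC]; omega
          obtain ⟨a, b, _, _, _, _, hiff, hcenc⟩ := ih (S + 4*m + 2) (S + 5*m + 2)
            (by omega) (by omega)
          obtain ⟨ha, hb⟩ := hcenc hcen.symm
          have hsub : Relation.ReflTransGen
              (SEdge (S + 4*m + 2) ((S + 4*m + 2) + 3^n - 1)) (S + 5*m + 2) i :=
            (hiff i).mpr (by omega)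
          rw [show (S + 4*m + 2) + 3^n - 1 = S + 6*m + 2 from by omega] at hsub
          have hlift := Relation.ReflTransGen.mono (fun _ _ h => lift_right hne h) _ _ hsub
          have e := SEdge.cr S (S + 6*m + 2) hne
          rw [hC, hR] at e
          exact hlift.head e
    · -- j is not the center
      have hjC' : j ≠ sC S (S + 3^(n+1) - 1) := by rw [hE, hC]; exact hjC
      rcases (by omega : j ≤ S + 2*m ∨ (S + 2*m + 1 ≤ j ∧ j ≤ S + 4*m + 1) ∨
          S + 4*m + 2 ≤ j) with hj' | hj' | hj'
      · obtain ⟨a, b, ha1, ha2, hb1, hb2, hiff, _⟩ := ih S j hj1 (by omega)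
        refine ⟨a, b, ha1, ha2, hb1, by omega, ?_, fun h => absurd (h.trans hC) hjC⟩
        intro i
        constructor
        · intro h
          have := reach_restrict n S S j i (Or.inl rfl) hj1 (by omega) hjC'
            (by rw [hE]; exact h)
          exact (hiff i).mp this
        · intro hi
          have hsub := (hiff i).mpr hi
          rw [show S + 3^n - 1 = S + 2*m from by omega] at hsub
          exact Relation.ReflTransGen.mono (fun _ _ h => lift_left hne h) _ _ hsub
      · obtain ⟨a, b, ha1, ha2, hb1, hb2, hiff, _⟩ := ih (S + 2*m + 1) j
          (by omega) (by omega)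
        refine ⟨a, b, by omega, ha2, hb1, by omega, ?_, fun h => absurd (h.trans hC) hjC⟩
        intro i
        constructor
        · intro h
          have := reach_restrict n S (S + 3^n) j i (Or.inr (Or.inl rfl))
            (by omega) (by omega) hjC' (by rw [hE]; exact h)
          rw [show S + 3^n = S + 2*m + 1 from by omega] at this
          exact (hiff i).mp this
        · intro hi
          have hsub := (hiff i).mpr hi
          rw [show (S + 2*m + 1) + 3^n - 1 = S + 4*m + 1 from by omega] at hsub
          exact Relation.ReflTransGen.mono (fun _ _ h => lift_mid hne h) _ _ hsub
      · obtain ⟨a, b, ha1, ha2, hb1, hb2, hiff, _⟩ := ih (S + 4*m + 2) j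
          (by omega) (by omega)
        refine ⟨a, b, by omega, ha2, hb1, by omega, ?_, fun h => absurd (h.trans hC) hjC⟩
        intro i
        constructor
        · intro h
          have := reach_restrict n S (S + 2*3^n) j i (Or.inr (Or.inr rfl))
            (by omega) (by omega) hjC' (by rw [hE]; exact h)
          rw [show S + 2*3^n = S + 4*m + 2 from by omega] at this
          exact (hiff i).mp this
        · intro hi
          have hsub := (hiff i).mpr hi
          rw [show (S + 4*m + 2) + 3^n - 1 = S + 6*m + 2 from by omega] at hsub
          exact Relation.ReflTransGen.mono (fun _ _ h => lift_right hne h) _ _ hsub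

/-- in the full Sierpinski tree on `3 ^ k` nodes, the descendants
of the root `C = (3 ^ k - 1) / 2` (including `C`) are exactly all `3 ^ k`
nodes, and every node's descendant set is a contiguous interval of indices
containing that node. -/
theorem sierpinski_descendant_intervals (k : ℕ) :
    (∀ i, reaches k ((3 ^ k - 1) / 2) i ↔ i < 3 ^ k) ∧
    (∀ j < 3 ^ k, ∃ a b, a ≤ j ∧ j ≤ b ∧
      ∀ i, reaches k j i ↔ a ≤ i ∧ i ≤ b) := by
  have hp : 1 ≤ 3^k := Nat.one_le_pow _ _ (by norm_num)
  have h0 : (3:ℕ)^k - 1 = 0 + 3^k - 1 := by omega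
  have hCval : sC 0 (0 + 3^k - 1) = (3^k - 1) / 2 := by simp only [sC]; omega
  constructor
  · intro i
    obtain ⟨a, b, ha1, ha2, hb1, hb2, hiff, hcen⟩ :=
      sierpinski_main k 0 (sC 0 (0 + 3^k - 1)) (Nat.zero_le _) (by rw [hCval]; omega)
    obtain ⟨ha, hb⟩ := hcen rfl
    have := hiff i
    rw [hCval] at this
    show Relation.ReflTransGen (SEdge 0 (3^k - 1)) ((3^k - 1)/2) i ↔ i < 3^k
    rw [show SEdge 0 (3^k - 1) = SEdge 0 (0 + 3^k - 1) from by rw [← h0], this]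
    omega
  · intro j hj
    obtain ⟨a, b, ha1, ha2, hb1, hb2, hiff, _⟩ :=
      sierpinski_main k 0 j (Nat.zero_le _) (by omega)
    refine ⟨a, b, ha2, hb1, ?_⟩
    intro i
    show Relation.ReflTransGen (SEdge 0 (3^k - 1)) j i ↔ a ≤ i ∧ i ≤ b
    rw [show SEdge 0 (3^k - 1) = SEdge 0 (0 + 3^k - 1) from by rw [← h0], hiff i]
end

section
/- The weight w_N(j) is an increasing function of N: if 0 ≤ j < N ≤ M, then w_N(j) ≤ w_M(j). -/
set_option linter.all false


/-- Edges of the Sierpinski forest on `N` nodes: build the full tree on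
`3 ^ ⌈log₃ N⌉` nodes and delete every node with index `≥ N`. -/
def genEdge (N : ℕ) (p c : ℕ) : Prop :=
  fullEdge (Nat.clog 3 N) p c ∧ p < N ∧ c < N

/-- Reachability (descendant relation) in the Sierpinski forest on `N` nodes. -/
def genReaches (N : ℕ) (a b : ℕ) : Prop := Relation.ReflTransGen (genEdge N) a b

/-- The update set `B_N(j)` : `j` together with all of its ancestors. -/
def genUpd (N j : ℕ) : Set ℕ := {m | genReaches N m j}

/-- The prefix-sum query set `P_N(j)`. -/
def genQry (N j : ℕ) : Set ℕ :=
  {m | m < N ∧ (∀ i, genReaches N m i → i ≤ j) ∧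
    ∀ p, genEdge N p m → ¬ (∀ i, genReaches N p i → i ≤ j)}

/-- The weight `w_N(j) = |B_N(j) ∪ P_N(j)|`. -/
noncomputable def weight (N j : ℕ) : ℕ := (genUpd N j ∪ genQry N j).ncard


namespace SierpAux

/-- `hh a = (3^a - 1)/2`, the half-width of a level-`a` interval. -/
def hh : ℕ → ℕ
  | 0 => 0
  | a+1 => 3 * hh a + 1

lemma two_hh (a : ℕ) : 2 * hh a + 1 = 3 ^ a := by
  induction a with
  | zero => simp [hh]
  | succ a ih => rw [pow_succ]; simp only [hh]; omega

lemma hh_lt (a : ℕ) : hh a < 3 ^ a := by have := two_hh a; omega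

lemma hh_succ (a : ℕ) : hh (a+1) = 3 ^ a + hh a := by
  have h1 := two_hh a; simp only [hh]; omega

lemma hh_split (b d : ℕ) : hh (b + d) = 3 ^ b * hh d + hh b := by
  induction d with
  | zero => simp [hh]
  | succ d ih =>
      have e : b + (d+1) = (b+d)+1 := rfl
      rw [e, hh_succ, ih, hh_succ, pow_add]; ring

lemma hh_mod {b a : ℕ} (h : b ≤ a) : hh a % 3 ^ b = hh b := by
  obtain ⟨d, rfl⟩ := Nat.exists_eq_add_of_le h
  rw [hh_split, Nat.mul_add_mod, Nat.mod_eq_of_lt (hh_lt b)]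

/-- center of the level-`a` aligned interval containing `i`. -/
def cen (a i : ℕ) : ℕ := 3 ^ a * (i / 3 ^ a) + hh a

lemma pow3_pos (a : ℕ) : 0 < (3:ℕ) ^ a := pow_pos (by norm_num) a

lemma cen_zero (i : ℕ) : cen 0 i = i := by simp [cen, hh]

lemma cen_rep (a k r : ℕ) (hr : r < 3 ^ a) : cen a (3 ^ a * k + r) = 3 ^ a * k + hh a := by
  unfold cen
  rw [Nat.mul_add_div (pow3_pos a), Nat.div_eq_of_lt hr, Nat.add_zero]

lemma cen_div (a i : ℕ) : cen a i / 3 ^ a = i / 3 ^ a := by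
  unfold cen
  rw [Nat.mul_add_div (pow3_pos a), Nat.div_eq_of_lt (hh_lt a), Nat.add_zero]

lemma cen_cen (a i : ℕ) : cen a (cen a i) = cen a i := by
  have h : cen a (cen a i) = 3 ^ a * (cen a i / 3 ^ a) + hh a := rfl
  rw [h, cen_div]; rfl

lemma cen_mono (a : ℕ) {i j : ℕ} (h : i ≤ j) : cen a i ≤ cen a j :=
  Nat.add_le_add_right (Nat.mul_le_mul_left _ (Nat.div_le_div_right h)) _

lemma cen_fix_iff (a c : ℕ) : cen a c = c ↔ c % 3 ^ a = hh a := by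
  have hd : 3 ^ a * (c / 3 ^ a) + c % 3 ^ a = c := Nat.div_add_mod c (3 ^ a)
  unfold cen
  constructor
  · intro h; exact Nat.add_left_cancel (hd.trans h.symm)
  · intro h; rw [← h]; exact hd

lemma cen_fix_of_rep (a k : ℕ) : cen a (3 ^ a * k + hh a) = 3 ^ a * k + hh a :=
  cen_rep a k (hh a) (hh_lt a)

lemma cen_fix_mono {b a c : ℕ} (hba : b ≤ a) (h : cen a c = c) : cen b c = c := by
  rw [cen_fix_iff] at h ⊢
  rw [← Nat.mod_mod_of_dvd c (pow_dvd_pow 3 hba), h, hh_mod hba]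

lemma div_congr_of_le {a b i c : ℕ} (hab : a ≤ b) (h : i / 3 ^ a = c / 3 ^ a) :
    i / 3 ^ b = c / 3 ^ b := by
  obtain ⟨d, rfl⟩ := Nat.exists_eq_add_of_le hab
  rw [pow_add, ← Nat.div_div_eq_div_mul, ← Nat.div_div_eq_div_mul, h]

lemma cen_congr {b i c : ℕ} (h : i / 3 ^ b = c / 3 ^ b) : cen b i = cen b c := by
  unfold cen; rw [h]

lemma sLCRT (t q : ℕ) :
    sL (3^(t+1)*q) (3^(t+1)*q + 3^(t+1) - 1) = 3^(t+1)*q + hh t ∧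
    sC (3^(t+1)*q) (3^(t+1)*q + 3^(t+1) - 1) = 3^(t+1)*q + hh (t+1) ∧
    sR (3^(t+1)*q) (3^(t+1)*q + 3^(t+1) - 1) = 3^(t+1)*q + 2*3^t + hh t ∧
    sT (3^(t+1)*q) (3^(t+1)*q + 3^(t+1) - 1) = 3^t - 1 := by
  have h1 : 2 * hh t + 1 = 3 ^ t := two_hh t
  have h2 : 2 * hh (t+1) + 1 = 3 ^ (t+1) := two_hh (t+1)
  have h3 : (3:ℕ)^(t+1) = 3 * 3^t := by rw [pow_succ]; ring
  unfold sT sR sC sL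
  omega

set_option maxHeartbeats 2000000 in
lemma edge_abs : ∀ t q p c, SEdge (3^t*q) (3^t*q + 3^t - 1) p c →
    ∃ a, a + 1 ≤ t ∧ cen a c = c ∧ p = cen (a+1) c ∧ p ≠ c := by
  intro t
  induction t with
  | zero =>
    intro q p c h
    exfalso
    have e : (3:ℕ)^0 * q + 3^0 - 1 = 3^0 * q := by simp
    rw [e] at h
    cases h <;> simp_all
  | succ t ih =>
    intro q p c h
    have h1 : 2 * hh t + 1 = 3 ^ t := two_hh t
    have h3 : (3:ℕ)^(t+1) = 3 * 3^t := by rw [pow_succ]; ring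
    have hhs : hh (t+1) = 3 ^ t + hh t := hh_succ t
    have hlt1 : hh t < 3 ^ (t+1) := by omega
    have f1 : (3:ℕ)^t*(3*q) = 3^(t+1)*q := by rw [pow_succ]; ring
    have f2 : (3:ℕ)^t*(3*q+1) = 3^(t+1)*q + 3^t := by rw [pow_succ]; ring
    have f3 : (3:ℕ)^t*(3*q+2) = 3^(t+1)*q + 2*3^t := by rw [pow_succ]; ring
    cases h with
    | cl _ _ hne =>
      rw [(sLCRT t q).1, (sLCRT t q).2.1]
      refine ⟨t, le_rfl, ?_, ?_, ?_⟩
      · rw [show (3:ℕ)^(t+1)*q + hh t = 3^t*(3*q) + hh t by omega]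
        exact cen_fix_of_rep t (3*q)
      · rw [cen_rep (t+1) q (hh t) hlt1]
      · omega
    | cr _ _ hne =>
      rw [(sLCRT t q).2.2.1, (sLCRT t q).2.1]
      refine ⟨t, le_rfl, ?_, ?_, ?_⟩
      · rw [show (3:ℕ)^(t+1)*q + 2*3^t + hh t = 3^t*(3*q+2) + hh t by omega]
        exact cen_fix_of_rep t (3*q+2)
      · rw [show (3:ℕ)^(t+1)*q + 2*3^t + hh t = 3^(t+1)*q + (2*3^t + hh t) by omega,
            cen_rep (t+1) q (2*3^t + hh t) (by omega)]
      · omega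
    | recL _ _ _ _ hne h' =>
      rw [(sLCRT t q).2.2.2] at h'
      rw [show (3:ℕ)^(t+1)*q + (3^t - 1) = 3^t*(3*q) + 3^t - 1 by omega] at h'
      rw [show (3:ℕ)^(t+1)*q = 3^t*(3*q) by omega] at h'
      obtain ⟨a, ha, hb, hc, hd⟩ := ih (3*q) p c h'
      exact ⟨a, by omega, hb, hc, hd⟩
    | recC _ _ _ _ hne h' =>
      rw [(sLCRT t q).2.2.2] at h'
      rw [show (3:ℕ)^(t+1)*q + (3^t - 1) + 1 = 3^t*(3*q+1) by omega] at h'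
      rw [show (3:ℕ)^(t+1)*q + 2*(3^t - 1) + 1 = 3^t*(3*q+1) + 3^t - 1 by omega] at h'
      obtain ⟨a, ha, hb, hc, hd⟩ := ih (3*q+1) p c h'
      exact ⟨a, by omega, hb, hc, hd⟩
    | recR _ _ _ _ hne h' =>
      rw [(sLCRT t q).2.2.2] at h'
      rw [show (3:ℕ)^(t+1)*q + 2*(3^t - 1) + 2 = 3^t*(3*q+2) by omega] at h'
      rw [show (3:ℕ)^(t+1)*q + 3^(t+1) - 1 = 3^t*(3*q+2) + 3^t - 1 by omega] at h'
      obtain ⟨a, ha, hb, hc, hd⟩ := ih (3*q+2) p c h'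
      exact ⟨a, by omega, hb, hc, hd⟩

lemma abs_edge_base (t q c : ℕ) (hc1 : 3^(t+1)*q ≤ c) (hc2 : c < 3^(t+1)*(q+1))
    (hfix : cen t c = c) (hne : cen (t+1) c ≠ c) :
    SEdge (3^(t+1)*q) (3^(t+1)*q + 3^(t+1) - 1) (cen (t+1) c) c := by
  have h1 : 2 * hh t + 1 = 3 ^ t := two_hh t
  have h3 : (3:ℕ)^(t+1) = 3 * 3^t := by rw [pow_succ]; ring
  have hhs : hh (t+1) = 3 ^ t + hh t := hh_succ t
  have f1 : (3:ℕ)^t*(3*q) = 3^(t+1)*q := by rw [pow_succ]; ring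
  have f2 : (3:ℕ)^t*(3*q+1) = 3^(t+1)*q + 3^t := by rw [pow_succ]; ring
  have f3 : (3:ℕ)^t*(3*q+2) = 3^(t+1)*q + 2*3^t := by rw [pow_succ]; ring
  have f6 : (3:ℕ)^(t+1)*(q+1) = 3^(t+1)*q + 3*3^t := by rw [pow_succ]; ring
  have hSE : (3:ℕ)^(t+1)*q ≠ 3^(t+1)*q + 3^(t+1) - 1 := by omega
  have hrep : 3^t * (c / 3^t) + c % 3^t = c := Nat.div_add_mod c (3^t)
  have hq1a : 3*q ≤ c / 3^t := by
    rw [Nat.le_div_iff_mul_le (pow3_pos t)]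
    rw [show 3*q*3^t = 3^t*(3*q) by ring]
    omega
  have hq1b : c / 3^t < 3*q + 3 := by
    rw [Nat.div_lt_iff_lt_mul (pow3_pos t)]
    rw [show (3*q+3)*3^t = 3^t*(3*q) + 3*3^t by ring]
    omega
  have hmod : c % 3^t = hh t := (cen_fix_iff _ _).mp hfix
  have hce : c = 3^t * (c / 3^t) + hh t := by omega
  have hq : c / 3^t = 3*q ∨ c / 3^t = 3*q + 1 ∨ c / 3^t = 3*q+2 := by omega
  rcases hq with hq | hq | hq
  · rw [hq] at hce
    have hcc : c = 3^(t+1)*q + hh t := by omega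
    have hcen : cen (t+1) c = 3^(t+1)*q + hh (t+1) := by
      rw [hcc]; exact cen_rep (t+1) q (hh t) (by omega)
    rw [hcen, hcc, ← (sLCRT t q).2.1, ← (sLCRT t q).1]
    exact SEdge.cl _ _ hSE
  · rw [hq] at hce
    have hcc : c = 3^(t+1)*q + hh (t+1) := by omega
    have : cen (t+1) c = c := by
      rw [hcc]; exact cen_rep (t+1) q (hh (t+1)) (hh_lt (t+1))
    exact absurd this hne
  · rw [hq] at hce
    have hcc : c = 3^(t+1)*q + 2*3^t + hh t := by omega
    have hcc2 : c = 3^(t+1)*q + (2*3^t + hh t) := by omega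
    have hcen : cen (t+1) c = 3^(t+1)*q + hh (t+1) := by
      rw [hcc2]; exact cen_rep (t+1) q (2*3^t + hh t) (by omega)
    rw [hcen, hcc, ← (sLCRT t q).2.1, ← (sLCRT t q).2.2.1]
    exact SEdge.cr _ _ hSE

lemma abs_edge : ∀ t q a c, a + 1 ≤ t → 3^t*q ≤ c → c < 3^t*(q+1) →
    cen a c = c → cen (a+1) c ≠ c →
    SEdge (3^t*q) (3^t*q + 3^t - 1) (cen (a+1) c) c := by
  intro t
  induction t with
  | zero => intro q a c ha _ _ _ _; omega
  | succ t ih =>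
    intro q a c ha hc1 hc2 hfix hne
    by_cases hat : a = t
    · subst hat
      exact abs_edge_base a q c hc1 hc2 hfix hne
    · have h1 : 2 * hh t + 1 = 3 ^ t := two_hh t
      have h3 : (3:ℕ)^(t+1) = 3 * 3^t := by rw [pow_succ]; ring
      have f1 : (3:ℕ)^t*(3*q) = 3^(t+1)*q := by rw [pow_succ]; ring
      have f2 : (3:ℕ)^t*(3*q+1) = 3^(t+1)*q + 3^t := by rw [pow_succ]; ring
      have f3 : (3:ℕ)^t*(3*q+2) = 3^(t+1)*q + 2*3^t := by rw [pow_succ]; ring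
      have f4 : (3:ℕ)^t*(3*q+1+1) = 3^(t+1)*q + 2*3^t := by rw [pow_succ]; ring
      have f5 : (3:ℕ)^t*(3*q+2+1) = 3^(t+1)*q + 3*3^t := by rw [pow_succ]; ring
      have f6 : (3:ℕ)^(t+1)*(q+1) = 3^(t+1)*q + 3*3^t := by rw [pow_succ]; ring
      have hSE : (3:ℕ)^(t+1)*q ≠ 3^(t+1)*q + 3^(t+1) - 1 := by omega
      have hrep : 3^t * (c / 3^t) + c % 3^t = c := Nat.div_add_mod c (3^t)
      have hq1a : 3*q ≤ c / 3^t := by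
        rw [Nat.le_div_iff_mul_le (pow3_pos t)]
        rw [show 3*q*3^t = 3^t*(3*q) by ring]
        omega
      have hq1b : c / 3^t < 3*q + 3 := by
        rw [Nat.div_lt_iff_lt_mul (pow3_pos t)]
        rw [show (3*q+3)*3^t = 3^t*(3*q) + 3*3^t by ring]
        omega
      have ha' : a + 1 ≤ t := by omega
      have hq : c / 3^t = 3*q ∨ c / 3^t = 3*q + 1 ∨ c / 3^t = 3*q+2 := by omega
      rcases hq with hq | hq | hq <;> rw [hq] at hrep
      · apply SEdge.recL _ _ _ _ hSE
        rw [(sLCRT t q).2.2.2]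
        rw [show (3:ℕ)^(t+1)*q + (3^t - 1) = 3^t*(3*q) + 3^t - 1 by omega]
        rw [show (3:ℕ)^(t+1)*q = 3^t*(3*q) by omega]
        exact ih (3*q) a c ha' (by omega)
          (by rw [show (3:ℕ)^t*(3*q+1) = 3^t*(3*q) + 3^t by ring]; omega) hfix hne
      · apply SEdge.recC _ _ _ _ hSE
        rw [(sLCRT t q).2.2.2]
        rw [show (3:ℕ)^(t+1)*q + (3^t - 1) + 1 = 3^t*(3*q+1) by omega]
        rw [show (3:ℕ)^(t+1)*q + 2*(3^t - 1) + 1 = 3^t*(3*q+1) + 3^t - 1 by omega]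
        exact ih (3*q+1) a c ha' (by omega) (by omega) hfix hne
      · apply SEdge.recR _ _ _ _ hSE
        rw [(sLCRT t q).2.2.2]
        rw [show (3:ℕ)^(t+1)*q + 2*(3^t - 1) + 2 = 3^t*(3*q+2) by omega]
        rw [show (3:ℕ)^(t+1)*q + 3^(t+1) - 1 = 3^t*(3*q+2) + 3^t - 1 by omega]
        exact ih (3*q+2) a c ha' (by omega) (by omega) hfix hne

lemma edge_abs0 {K p c : ℕ} (h : SEdge 0 (3^K - 1) p c) :
    ∃ a, a + 1 ≤ K ∧ cen a c = c ∧ p = cen (a+1) c ∧ p ≠ c := by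
  apply edge_abs K 0 p c
  simpa using h

lemma abs_edge0 {K a c : ℕ} (ha : a + 1 ≤ K) (hc : c < 3^K) (hfix : cen a c = c)
    (hne : cen (a+1) c ≠ c) : SEdge 0 (3^K - 1) (cen (a+1) c) c := by
  have h := abs_edge K 0 a c ha (by simp) (by simpa using hc) hfix hne
  simpa using h

lemma fullEdge_abs {K p c : ℕ} (h : fullEdge K p c) :
    ∃ a, a + 1 ≤ K ∧ cen a c = c ∧ p = cen (a+1) c ∧ p ≠ c := edge_abs0 h

lemma reaches_abs {N m i : ℕ} (hi : i < N) (h : genReaches N m i) :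
    ∃ a, a ≤ Nat.clog 3 N ∧ m = cen a i ∧ ∀ b, b ≤ a → cen b i < N := by
  have h' : Relation.ReflTransGen (genEdge N) m i := h
  clear h
  induction h' using Relation.ReflTransGen.head_induction_on with
  | refl =>
    refine ⟨0, Nat.zero_le _, (cen_zero i).symm, ?_⟩
    intro b hb
    rw [Nat.le_zero.mp hb, cen_zero]
    exact hi
  | @head mm cc hedge hsub ih =>
    obtain ⟨a, haK, hceq, hlt⟩ := ih
    obtain ⟨hfe, hmN, hcN⟩ := hedge
    obtain ⟨a2, ha2K, hfix2, hpeq, hpne⟩ := fullEdge_abs hfe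
    have hfixa : cen a cc = cc := by rw [hceq]; exact cen_cen a i
    have haa2 : a ≤ a2 := by
      by_contra hgt
      push_neg at hgt
      have hcfix : cen (a2+1) cc = cc := cen_fix_mono (by omega) hfixa
      exact hpne (hpeq.trans hcfix)
    have hdiv : cc / 3^a = i / 3^a := by rw [hceq]; exact cen_div a i
    refine ⟨a2 + 1, ha2K, ?_, ?_⟩
    · rw [hpeq]
      exact cen_congr (div_congr_of_le (by omega) hdiv)
    · intro b hb
      rcases Nat.lt_or_ge b (a+1) with hba | hba
      · exact hlt b (by omega)
      · have e : cen b i = cen b cc := cen_congr (div_congr_of_le (by omega) hdiv.symm)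
        rcases Nat.lt_or_ge b (a2+1) with hb2 | hb2
        · have hfx : cen b cc = cc := cen_fix_mono (by omega) hfix2
          rw [e, hfx]
          exact hcN
        · have hbe : b = a2 + 1 := by omega
          rw [e, hbe, ← hpeq]
          exact hmN

lemma abs_reaches {N i : ℕ} : ∀ a, a ≤ Nat.clog 3 N → (∀ b, b ≤ a → cen b i < N) →
    genReaches N (cen a i) i := by
  intro a
  induction a with
  | zero =>
    intro _ _
    rw [cen_zero]
    exact Relation.ReflTransGen.refl
  | succ a ih =>
    intro haK hlt
    by_cases he : cen (a+1) i = cen a i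
    · rw [he]; exact ih (by omega) (fun b hb => hlt b (by omega))
    · have hKpow : N ≤ 3 ^ Nat.clog 3 N := Nat.le_pow_clog (by norm_num) N
      have hc1 : cen (a+1) (cen a i) = cen (a+1) i :=
        cen_congr (div_congr_of_le (by omega) (cen_div a i))
      have hedge : SEdge 0 (3 ^ Nat.clog 3 N - 1) (cen (a+1) (cen a i)) (cen a i) :=
        abs_edge0 haK (lt_of_lt_of_le (hlt a (by omega)) hKpow) (cen_cen a i)
          (by rw [hc1]; exact he)
      rw [hc1] at hedge
      have hge : genEdge N (cen (a+1) i) (cen a i) :=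
        ⟨hedge, hlt (a+1) le_rfl, hlt a (by omega)⟩
      exact Relation.ReflTransGen.head hge (ih (by omega) (fun b hb => hlt b (by omega)))

lemma reaches_left_bound {N m i : ℕ} (h : genReaches N m i) : m = i ∨ m < N := by
  have h' : Relation.ReflTransGen (genEdge N) m i := h
  clear h
  induction h' using Relation.ReflTransGen.head_induction_on with
  | refl => exact Or.inl rfl
  | head hedge _ _ => exact Or.inr hedge.2.1

lemma reaches_right_bound {N m i : ℕ} (h : genReaches N m i) : m = i ∨ i < N := by
  rcases Relation.ReflTransGen.cases_tail h with he | ⟨c, _, hedge⟩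
  · exact Or.inl he.symm
  · exact Or.inr hedge.2.2

lemma reaches_transfer {N M m i : ℕ} (hNM : N ≤ M) (hi : i < N) (h : genReaches N m i) :
    genReaches M m i := by
  obtain ⟨a, haK, hm, hlt⟩ := reaches_abs hi h
  rw [hm]
  exact abs_reaches a (le_trans haK (Nat.clog_mono_right 3 hNM))
    (fun b hb => lt_of_lt_of_le (hlt b hb) hNM)

lemma union_subset_union {j N M : ℕ} (hjN : j < N) (hNM : N ≤ M) :
    genUpd N j ∪ genQry N j ⊆ genUpd M j ∪ genQry M j := by
  have hjM : j < M := lt_of_lt_of_le hjN hNM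
  rintro m (hm | hm)
  · exact Or.inl (reaches_transfer hNM hjN hm)
  · obtain ⟨hmN, hdesc, hpar⟩ := hm
    by_cases hA : ∀ i, genReaches M m i → i ≤ j
    · refine Or.inr ⟨lt_of_lt_of_le hmN hNM, hA, ?_⟩
      intro p hpedge hall
      rcases Nat.lt_or_ge p N with hpN | hpN
      · obtain ⟨hfe, hpM, hmM⟩ := hpedge
        obtain ⟨a2, ha2K, hfix, hpeq, hpne⟩ := fullEdge_abs hfe
        have hNpow : N ≤ 3 ^ Nat.clog 3 N := Nat.le_pow_clog (by norm_num) N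
        have ha2N : a2 + 1 ≤ Nat.clog 3 N := by
          by_contra hgt
          push_neg at hgt
          have hm3 : m < 3 ^ (a2+1) :=
            lt_of_lt_of_le (lt_of_lt_of_le hmN hNpow)
              (Nat.pow_le_pow_right (by norm_num) (by omega))
          have hdm : m / 3^(a2+1) = 0 := Nat.div_eq_of_lt hm3
          have hcm : cen (a2+1) m = hh (a2+1) := by simp [cen, hdm]
          have hp : p = hh (a2+1) := by rw [hpeq, hcm]
          have hhge : (3:ℕ) ^ a2 ≤ hh (a2+1) := by
            have := hh_succ a2; omega
          have h3c : (3:ℕ)^(Nat.clog 3 N) ≤ 3 ^ a2 :=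
            Nat.pow_le_pow_right (by norm_num) (by omega)
          omega
        have hse : SEdge 0 (3 ^ Nat.clog 3 N - 1) (cen (a2+1) m) m :=
          abs_edge0 ha2N (lt_of_lt_of_le hmN hNpow) hfix (by rw [← hpeq]; exact hpne)
        rw [← hpeq] at hse
        have hedgeN : genEdge N p m := ⟨hse, hpN, hmN⟩
        apply hpar p hedgeN
        intro i hri
        rcases reaches_right_bound hri with he | hiN
        · exact hall i (he ▸ Relation.ReflTransGen.refl)
        · exact hall i (reaches_transfer hNM hiN hri)
      · have := hall p Relation.ReflTransGen.refl
        omega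
    · push_neg at hA
      obtain ⟨i, hri, hji⟩ := hA
      have hmj : m ≤ j := hdesc m Relation.ReflTransGen.refl
      have hiM : i < M := by
        rcases reaches_right_bound hri with he | hlt
        · omega
        · exact hlt
      obtain ⟨a, haK, hm, hlt⟩ := reaches_abs hiM hri
      have hlb : 3^a * (i / 3^a) ≤ m := by rw [hm]; exact Nat.le_add_right _ _
      have hdiveq : j / 3^a = i / 3^a := by
        have h0 : (i / 3^a) * 3^a ≤ j := by
          rw [mul_comm]; exact le_trans hlb hmj
        have h1 : i / 3^a ≤ j / 3^a := (Nat.le_div_iff_mul_le (pow3_pos a)).mpr h0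
        have h2 : j / 3^a ≤ i / 3^a := Nat.div_le_div_right hji.le
        omega
      have hcenj : cen a j = m := by rw [hm]; exact cen_congr hdiveq
      refine Or.inl ?_
      show genReaches M m j
      rw [← hcenj]
      exact abs_reaches a haK
        (fun b hb => lt_of_le_of_lt (cen_mono b hji.le) (hlt b hb))

end SierpAux

/-- Lemma 1: the weight `w_N(j)` is an increasing function of
`N`: if `j < N ≤ M` then `w_N(j) ≤ w_M(j)`. -/
theorem weight_monotone (j N M : ℕ) (hjN : j < N) (hNM : N ≤ M) :
    weight N j ≤ weight M j := by
  have hsub := SierpAux.union_subset_union hjN hNM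
  have hfin : (genUpd M j ∪ genQry M j).Finite := by
    apply Set.Finite.subset (Set.finite_Iio M)
    rintro m (hm | hm)
    · rcases SierpAux.reaches_left_bound hm with he | hlt
      · exact he ▸ (lt_of_lt_of_le hjN hNM)
      · exact hlt
    · exact hm.1
  unfold weight
  exact Set.ncard_le_ncard hsub hfin
end
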